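/- Let K be a field such that for every n ∈ ℕ there exists a nontrivial n≤-henselian valuation on K. Then K is t-henselian: there exist a field L and a nontrivial henselian valuation on L such that K and L satisfy the same sentences of the first-order language of rings (K ≡ L in Lr = {+, −, ·, 0, 1}). -/

import Mathlib

set_option linter.unusedSectionVars false
set_option maxHeartbeats 1000000


open Polynomial

section ValuationPrelude

variable {K : Type*} [Field K] {G : Type*} [AddCommGroup G] [LinearOrder G] [IsOrderedAddMonoid G]

/-- `v : K → G ∪ {∞}` is a (surjective) valuation on the field `K` with value group `G`. -/
def IsValuation (v : K → WithTop G) : Prop :=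
  (∀ x, v x = ⊤ ↔ x = 0) ∧
  (∀ x y, v (x * y) = v x + v y) ∧
  (∀ x y, min (v x) (v y) ≤ v (x + y)) ∧
  (∀ g : G, ∃ x, v x = (g : WithTop G))

/-- Hensel's Lemma holds for `(K, v)` for all polynomials of degree at most `n`. -/
def DegLEHenselian (v : K → WithTop G) (n : ℕ) : Prop :=
  ∀ f : Polynomial K, f.natDegree ≤ n → (∀ i, (0 : WithTop G) ≤ v (f.coeff i)) →
    ∀ a : K, (0 : WithTop G) ≤ v a →
      (0 : WithTop G) < v (f.eval a) →
      ¬ (0 : WithTop G) < v (f.derivative.eval a) →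
      ∃ b : K, (0 : WithTop G) ≤ v b ∧ f.eval b = 0 ∧ (0 : WithTop G) < v (b - a)

/-- `(K, v)` is henselian: Hensel's Lemma holds for all polynomials. -/
def IsHenselianValuation (v : K → WithTop G) : Prop :=
  ∀ n : ℕ, DegLEHenselian v n

end ValuationPrelude

open FirstOrder FirstOrder.Ring FirstOrder.Language

universe u

/-- A (surjective, additively written) valuation on the field `K`,
bundled with its value group. -/
structure ValuationOn (K : Type u) [Field K] : Type (u + 1) where
  Γ : Type u
  [grp : AddCommGroup Γ]
  [grpLO : LinearOrder Γ]
  [grpOrd : IsOrderedAddMonoid Γ]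
  v : K → WithTop Γ
  isVal : IsValuation v

attribute [instance] ValuationOn.grp
attribute [instance] ValuationOn.grpLO
attribute [instance] ValuationOn.grpOrd

/-- The valuation `w` is nontrivial. -/
def ValuationOn.Nontriv {K : Type u} [Field K] (w : ValuationOn K) : Prop :=
  ∃ x : K, x ≠ 0 ∧ w.v x ≠ (0 : WithTop w.Γ)

/-- `(K, w)` is `n≤`-henselian. -/
def ValuationOn.DegLEHens {K : Type u} [Field K] (w : ValuationOn K) (n : ℕ) : Prop :=
  DegLEHenselian w.v n

/-- `(K, w)` is henselian. -/
def ValuationOn.Hens {K : Type u} [Field K] (w : ValuationOn K) : Prop :=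
  ∀ n : ℕ, DegLEHenselian w.v n

/-- A henselian field: a field together with a nontrivial henselian valuation on it. -/
structure HenselianFieldBundle : Type (u + 1) where
  L : Type u
  [fld : Field L]
  val : ValuationOn L
  nontriv : val.Nontriv
  hens : val.Hens

attribute [instance] HenselianFieldBundle.fld

/-- `K` and `L` satisfy the same sentences of the first-order language of rings. -/
def RingElemEquiv (K : Type*) (L : Type*) [Field K] [Field L] : Prop :=
  letI := compatibleRingOfRing K
  letI := compatibleRingOfRing L
  K ≅[Language.ring] L



section UPGAux

open Filter

variable {ι : Type} (U : Ultrafilter ι) (G : ι → Type u) [∀ i, AddCommGroup (G i)] [∀ i, LinearOrder (G i)] [∀ i, IsOrderedAddMonoid (G i)]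

def UPG : Type u := Quotient ((U : Filter ι).productSetoid G)

namespace UPG

variable {U G}

def mk (f : ∀ i, G i) : UPG U G := Quotient.mk'' f

@[simp] theorem mk_eq_mk {f g : ∀ i, G i} : (mk f : UPG U G) = mk g ↔ ∀ᶠ i in U, f i = g i :=
  Quotient.eq''

theorem ind {p : UPG U G → Prop} (h : ∀ f, p (mk f)) : ∀ x, p x :=
  fun x => Quotient.inductionOn' x h

instance : Add (UPG U G) :=
  ⟨Quotient.map₂' (fun f g i => f i + g i) (fun _ _ h1 _ _ h2 =>
    h2.mp (h1.mono fun i hi hj => by simp [hi, hj]))⟩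

@[simp] theorem mk_add (f g : ∀ i, G i) : (mk f + mk g : UPG U G) = mk (fun i => f i + g i) := rfl

instance : Zero (UPG U G) := ⟨mk fun _ => 0⟩

theorem zero_def : (0 : UPG U G) = mk (fun _ => 0) := rfl

instance : Neg (UPG U G) :=
  ⟨Quotient.map' (fun f i => - f i) (fun _ _ h => h.mono fun i hi => by simp [hi])⟩

@[simp] theorem mk_neg (f : ∀ i, G i) : (-mk f : UPG U G) = mk (fun i => - f i) := rfl

instance : AddCommGroup (UPG U G) where
  add_assoc := by refine ind fun f => ind fun g => ind fun h => ?_; simp [add_assoc]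
  zero_add := by refine ind fun f => ?_; simp [zero_def]
  add_zero := by refine ind fun f => ?_; simp [zero_def]
  neg_add_cancel := by refine ind fun f => ?_; simp [zero_def]
  add_comm := by refine ind fun f => ind fun g => ?_; simp [add_comm]
  nsmul := nsmulRec
  zsmul := zsmulRec

instance : LE (UPG U G) :=
  ⟨fun x y => Quotient.liftOn₂' x y (fun f g => ∀ᶠ i in U, f i ≤ g i) (by
    intro f₁ g₁ f₂ g₂ h1 h2
    refine propext ⟨fun h => ?_, fun h => ?_⟩
    · filter_upwards [h, h1, h2] with i hi e1 e2; rw [← e1, ← e2]; exact hi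
    · filter_upwards [h, h1, h2] with i hi e1 e2; rw [e1, e2]; exact hi)⟩

@[simp] theorem mk_le_mk {f g : ∀ i, G i} : (mk f : UPG U G) ≤ mk g ↔ ∀ᶠ i in U, f i ≤ g i :=
  Iff.rfl

noncomputable instance : LinearOrder (UPG U G) where
  le_refl := ind fun f => mk_le_mk.2 (Eventually.of_forall fun _ => le_rfl)
  le_trans := ind fun f => ind fun g => ind fun h => fun h1 h2 => by
    simp only [mk_le_mk] at *
    filter_upwards [h1, h2] with i hi hj using le_trans hi hj
  le_antisymm := ind fun f => ind fun g => fun h1 h2 => by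
    simp only [mk_le_mk, mk_eq_mk] at *
    filter_upwards [h1, h2] with i hi hj using le_antisymm hi hj
  le_total := ind fun f => ind fun g => by
    rcases U.em (fun i => f i ≤ g i) with h | h
    · exact Or.inl (mk_le_mk.2 h)
    · exact Or.inr (mk_le_mk.2 (h.mono fun i hi => le_of_not_ge hi))
  toDecidableLE := Classical.decRel _

noncomputable instance : IsOrderedAddMonoid (UPG U G) where
  add_le_add_left := ind fun f => ind fun g => fun h => ind fun k => by
    simp only [mk_le_mk, mk_add] at *
    filter_upwards [h] with i hi using add_le_add hi le_rfl

theorem mk_lt_mk {f g : ∀ i, G i} : (mk f : UPG U G) < mk g ↔ ∀ᶠ i in U, f i < g i := by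
  rw [lt_iff_le_not_ge, mk_le_mk, mk_le_mk, ← Ultrafilter.eventually_not]
  constructor
  · rintro ⟨h1, h2⟩; filter_upwards [h1, h2] with i hi hj using lt_of_le_not_ge hi hj
  · intro h; exact ⟨h.mono fun i hi => hi.le, h.mono fun i hi => not_le_of_gt hi⟩

end UPG
end UPGAux

section ValAux

open Filter

theorem WithTop.coe_untop'_of_ne_top {α : Type*} {d : α} {x : WithTop α} (h : x ≠ ⊤) :
    ((x.untopD d : α) : WithTop α) = x := by
  cases x using WithTop.recTopCoe with
  | top => exact absurd rfl h
  | coe a => simp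

section ValCore

open UPG

variable {K : Type u} [Field K] {ι : Type} (U : Ultrafilter ι) (w : ι → ValuationOn K)

/-- untopped family of values -/
noncomputable def ut (f : ι → K) : ∀ i, (w i).Γ := fun i => ((w i).v (f i)).untopD 0

open Classical in
/-- the ultraproduct valuation on families -/
noncomputable def uvA (f : ι → K) : WithTop (UPG U fun i => (w i).Γ) :=
  if (∀ᶠ i in U, f i = 0) then ⊤ else ((UPG.mk (ut w f) : UPG U fun i => (w i).Γ) : WithTop _)

variable {U w}

theorem ut_spec {f : ι → K} {i : ι} (h : f i ≠ 0) :
    ((ut w f i : (w i).Γ) : WithTop (w i).Γ) = (w i).v (f i) :=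
  WithTop.coe_untop'_of_ne_top (fun ht => h (((w i).isVal.1 _).1 ht))

theorem uvA_of_ev {f : ι → K} (h : ∀ᶠ i in U, f i = 0) : uvA U w f = ⊤ := if_pos h

theorem uvA_of_nev {f : ι → K} (h : ¬ ∀ᶠ i in U, f i = 0) :
    uvA U w f = ((UPG.mk (ut w f) : UPG U fun i => (w i).Γ) : WithTop _) := if_neg h

theorem uvA_congr {f g : ι → K} (h : ∀ᶠ i in U, f i = g i) : uvA U w f = uvA U w g := by
  by_cases hz : ∀ᶠ i in U, f i = 0
  · rw [uvA_of_ev hz, uvA_of_ev (by filter_upwards [h, hz] with i hi hj; rw [← hi]; exact hj)]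
  · have hz' : ¬ ∀ᶠ i in U, g i = 0 := fun hg =>
      hz (by filter_upwards [h, hg] with i hi hj; rw [hi]; exact hj)
    rw [uvA_of_nev hz, uvA_of_nev hz']
    congr 1
    rw [mk_eq_mk]
    filter_upwards [h] with i hi
    simp [ut, hi]

theorem uvA_eq_top_iff {f : ι → K} : uvA U w f = ⊤ ↔ ∀ᶠ i in U, f i = 0 := by
  by_cases hz : ∀ᶠ i in U, f i = 0
  · simp [uvA_of_ev hz, hz]
  · simp [uvA_of_nev hz, hz]

theorem uvA_nonneg_iff {f : ι → K} :
    (0 : WithTop (UPG U fun i => (w i).Γ)) ≤ uvA U w f ↔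
      ∀ᶠ i in U, (0 : WithTop (w i).Γ) ≤ (w i).v (f i) := by
  by_cases hz : ∀ᶠ i in U, f i = 0
  · rw [uvA_of_ev hz]
    refine iff_of_true le_top ?_
    filter_upwards [hz] with i hi
    rw [((w i).isVal.1 _).2 hi]
    exact le_top
  · rw [uvA_of_nev hz, ← WithTop.coe_zero, WithTop.coe_le_coe,
      show (0 : UPG U fun i => (w i).Γ) = UPG.mk (fun _ => 0) from rfl, mk_le_mk]
    rw [← Ultrafilter.eventually_not] at hz
    constructor
    · intro h
      filter_upwards [h, hz] with i hi hne
      rw [← ut_spec hne, ← WithTop.coe_zero, WithTop.coe_le_coe]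
      exact hi
    · intro h
      filter_upwards [h, hz] with i hi hne
      rw [← ut_spec hne, ← WithTop.coe_zero, WithTop.coe_le_coe] at hi
      exact hi

theorem uvA_pos_iff {f : ι → K} :
    (0 : WithTop (UPG U fun i => (w i).Γ)) < uvA U w f ↔
      ∀ᶠ i in U, (0 : WithTop (w i).Γ) < (w i).v (f i) := by
  by_cases hz : ∀ᶠ i in U, f i = 0
  · rw [uvA_of_ev hz]
    refine iff_of_true (by rw [← WithTop.coe_zero]; exact WithTop.coe_lt_top 0) ?_
    filter_upwards [hz] with i hi
    rw [((w i).isVal.1 _).2 hi, ← WithTop.coe_zero]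
    exact WithTop.coe_lt_top 0
  · rw [uvA_of_nev hz, ← WithTop.coe_zero, WithTop.coe_lt_coe,
      show (0 : UPG U fun i => (w i).Γ) = UPG.mk (fun _ => 0) from rfl, mk_lt_mk]
    rw [← Ultrafilter.eventually_not] at hz
    constructor
    · intro h
      filter_upwards [h, hz] with i hi hne
      rw [← ut_spec hne, ← WithTop.coe_zero, WithTop.coe_lt_coe]
      exact hi
    · intro h
      filter_upwards [h, hz] with i hi hne
      rw [← ut_spec hne, ← WithTop.coe_zero, WithTop.coe_lt_coe] at hi
      exact hi

theorem uvA_not_pos {f : ι → K}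
    (h : ¬ (0 : WithTop (UPG U fun i => (w i).Γ)) < uvA U w f) :
    ∀ᶠ i in U, ¬ (0 : WithTop (w i).Γ) < (w i).v (f i) := by
  rw [uvA_pos_iff, ← Ultrafilter.eventually_not] at h
  exact h

theorem uvA_le {f g : ι → K} (h : ∀ᶠ i in U, (w i).v (f i) ≤ (w i).v (g i)) :
    uvA U w f ≤ uvA U w g := by
  by_cases hzg : ∀ᶠ i in U, g i = 0
  · rw [uvA_of_ev hzg]; exact le_top
  · have hzf : ¬ ∀ᶠ i in U, f i = 0 := by
      intro hf
      apply hzg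
      filter_upwards [h, hf] with i hi hj
      rw [((w i).isVal.1 _).2 hj, top_le_iff] at hi
      exact ((w i).isVal.1 _).1 hi
    rw [uvA_of_nev hzg, uvA_of_nev hzf, WithTop.coe_le_coe, mk_le_mk]
    rw [← Ultrafilter.eventually_not] at hzg hzf
    filter_upwards [h, hzg, hzf] with i hi hg hf
    rw [← ut_spec hf, ← ut_spec hg, WithTop.coe_le_coe] at hi
    exact hi

theorem uvA_mul {f g : ι → K} : uvA U w (fun i => f i * g i) = uvA U w f + uvA U w g := by
  by_cases hzf : ∀ᶠ i in U, f i = 0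
  · rw [uvA_of_ev hzf, uvA_of_ev (by filter_upwards [hzf] with i hi; simp [hi]), top_add]
  · by_cases hzg : ∀ᶠ i in U, g i = 0
    · rw [uvA_of_ev hzg, uvA_of_ev (by filter_upwards [hzg] with i hi; simp [hi]), add_top]
    · have hz : ¬ ∀ᶠ i in U, f i * g i = 0 := by
        rw [← Ultrafilter.eventually_not] at *
        filter_upwards [hzf, hzg] with i hi hj
        exact mul_ne_zero hi hj
      rw [uvA_of_nev hz, uvA_of_nev hzf, uvA_of_nev hzg, ← WithTop.coe_add, WithTop.coe_inj,
        mk_add, mk_eq_mk]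
      rw [← Ultrafilter.eventually_not] at hzf hzg
      filter_upwards [hzf, hzg] with i hf hg
      have h1 : ((ut w (fun i => f i * g i) i : (w i).Γ) : WithTop (w i).Γ) =
          ((ut w f i + ut w g i : (w i).Γ) : WithTop (w i).Γ) := by
        rw [ut_spec (f := fun i => f i * g i) (mul_ne_zero hf hg), WithTop.coe_add,
          ut_spec hf, ut_spec hg]
        exact (w i).isVal.2.1 _ _
      exact WithTop.coe_inj.1 h1

theorem uvA_min_le {f g : ι → K} :
    min (uvA U w f) (uvA U w g) ≤ uvA U w (fun i => f i + g i) := by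
  have key : ∀ᶠ i in U, min ((w i).v (f i)) ((w i).v (g i)) ≤ (w i).v (f i + g i) :=
    Eventually.of_forall fun i => (w i).isVal.2.2.1 _ _
  rcases U.em (fun i => (w i).v (f i) ≤ (w i).v (g i)) with hc | hc
  · have : min (uvA U w f) (uvA U w g) ≤ uvA U w f := min_le_left _ _
    refine this.trans (uvA_le ?_)
    filter_upwards [key, hc] with i hi hle
    rwa [min_eq_left hle] at hi
  · have : min (uvA U w f) (uvA U w g) ≤ uvA U w g := min_le_right _ _
    refine this.trans (uvA_le ?_)
    filter_upwards [key, hc] with i hi hle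
    rw [min_eq_right (le_of_not_ge hle)] at hi
    exact hi

end ValCore

section GermVal

open UPG Polynomial

variable {K : Type u} [Field K] {ι : Type} {U : Ultrafilter ι} {w : ι → ValuationOn K}

noncomputable def uv (U : Ultrafilter ι) (w : ι → ValuationOn K) :
    Germ (U : Filter ι) K → WithTop (UPG U fun i => (w i).Γ) :=
  fun x => Filter.Germ.liftOn x (uvA U w) (fun _ _ h => uvA_congr h)

@[simp] theorem uv_coe (f : ι → K) : uv U w ↑f = uvA U w f := rfl

theorem germ_sum (s : Finset ℕ) (t : ℕ → ι → K) :
    (↑(fun i => ∑ j ∈ s, t j i) : Germ (U : Filter ι) K)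
      = ∑ j ∈ s, (↑(t j) : Germ (U : Filter ι) K) := by
  calc (↑(fun i => ∑ j ∈ s, t j i) : Germ (U : Filter ι) K)
      = Filter.Germ.coeRingHom (U : Filter ι) (∑ j ∈ s, t j) := by
        rw [Filter.Germ.coe_coeRingHom]
        congr 1
        funext i
        simp [Finset.sum_apply]
    _ = ∑ j ∈ s, (↑(t j) : Germ (U : Filter ι) K) := by rw [map_sum]; rfl

theorem uv_isVal : IsValuation (uv U w) := by
  refine ⟨fun x => ?_, fun x y => ?_, fun x y => ?_, fun γ => ?_⟩
  · refine x.inductionOn fun f => ?_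
    rw [uv_coe, uvA_eq_top_iff,
      show (0 : Germ (U : Filter ι) K) = Filter.Germ.ofFun (fun _ : ι => (0 : K)) from rfl, Filter.Germ.coe_eq]
    exact Iff.rfl
  · refine x.inductionOn fun f => ?_
    refine y.inductionOn fun g => ?_
    rw [← Filter.Germ.coe_mul, uv_coe, uv_coe, uv_coe]
    exact uvA_mul
  · refine x.inductionOn fun f => ?_
    refine y.inductionOn fun g => ?_
    rw [← Filter.Germ.coe_add, uv_coe, uv_coe, uv_coe]
    exact uvA_min_le
  · refine UPG.ind (p := fun γ => ∃ x, uv U w x = (γ : WithTop (UPG U fun i => (w i).Γ)))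
      (fun g => ?_) γ
    choose x hx using fun i => (w i).isVal.2.2.2 (g i)
    have hne : ∀ i, x i ≠ 0 := by
      intro i h0
      have h1 := hx i
      rw [h0, ((w i).isVal.1 0).2 rfl] at h1
      exact WithTop.top_ne_coe h1
    have hnev : ¬ ∀ᶠ i in U, x i = 0 := fun hev => (hev.exists).elim fun i hi => hne i hi
    refine ⟨↑x, ?_⟩
    rw [uv_coe, uvA_of_nev hnev]
    refine congrArg _ ?_
    rw [UPG.mk_eq_mk]
    refine Eventually.of_forall fun i => ?_
    refine WithTop.coe_inj.1 ?_
    rw [ut_spec (hne i), hx i]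

theorem uv_nontriv (hw : ∀ i, (w i).Nontriv) :
    ∃ x : Germ (U : Filter ι) K, x ≠ 0 ∧ uv U w x ≠ (0 : WithTop (UPG U fun i => (w i).Γ)) := by
  choose x hx0 hxv using hw
  have hnev : ¬ ∀ᶠ i in U, x i = 0 := fun hev => (hev.exists).elim fun i hi => hx0 i hi
  refine ⟨↑x, ?_, ?_⟩
  · intro heq0
    rw [show (0 : Germ (U : Filter ι) K) = Filter.Germ.ofFun (fun _ : ι => (0 : K)) from rfl] at heq0
    exact hnev (Filter.Germ.coe_eq.1 heq0)
  · rw [uv_coe, uvA_of_nev hnev, ← WithTop.coe_zero]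
    intro heq
    have h1 := WithTop.coe_inj.1 heq
    rw [show (0 : UPG U fun i => (w i).Γ) = UPG.mk (fun _ => 0) from rfl, UPG.mk_eq_mk] at h1
    obtain ⟨i, hi⟩ := h1.exists
    exact hxv i (by rw [← ut_spec (hx0 i), hi, WithTop.coe_zero])

theorem deg_mono {G : Type u} [AddCommGroup G] [LinearOrder G] [IsOrderedAddMonoid G] {v : K → WithTop G} {d m : ℕ}
    (hdm : d ≤ m) (hm : DegLEHenselian v m) : DegLEHenselian v d :=
  fun f hf => hm f (hf.trans hdm)

theorem uv_degLE (d : ℕ) (hd : ∀ᶠ i in U, DegLEHenselian (w i).v d) :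
    DegLEHenselian (uv U w) d := by
  intro f hdeg hcoeff a ha hfa hf'a
  have hex : ∀ x : Germ (U : Filter ι) K, ∃ g : ι → K, (↑g : Germ (U : Filter ι) K) = x :=
    fun x => x.inductionOn fun g => ⟨g, rfl⟩
  choose c hcrep using fun j => hex (f.coeff j)
  obtain ⟨A, hA⟩ := hex a
  set F : ι → K[X] :=
    fun i => ∑ j ∈ Finset.range (d + 1), Polynomial.C (c j i) * Polynomial.X ^ j with hF
  have hdlt : f.natDegree < d + 1 := Nat.lt_succ_of_le hdeg
  have hFdeg : ∀ i, (F i).natDegree ≤ d := fun i =>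
    Polynomial.natDegree_sum_le_of_forall_le _ _ fun j hj =>
      (Polynomial.natDegree_C_mul_X_pow_le _ _).trans (Nat.lt_succ_iff.1 (Finset.mem_range.1 hj))
  have hFcoeff : ∀ i j, (F i).coeff j = if j < d + 1 then c j i else 0 := by
    intro i j
    simp only [hF, Polynomial.finset_sum_coeff, Polynomial.coeff_C_mul, Polynomial.coeff_X_pow,
      mul_ite, mul_one, mul_zero]
    rw [Finset.sum_ite_eq (Finset.range (d + 1)) j (fun k => c k i)]
    simp [Finset.mem_range]
  have heval : ∀ g : ι → K,
      (↑(fun i => (F i).eval (g i)) : Germ (U : Filter ι) K) = Polynomial.eval (↑g) f := by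
    intro g
    have h2 : (fun i => (F i).eval (g i))
        = fun i => ∑ j ∈ Finset.range (d + 1), c j i * g i ^ j := by
      funext i
      simp [hF, Polynomial.eval_finset_sum]
    rw [h2, germ_sum, Polynomial.eval_eq_sum_range' hdlt]
    refine Finset.sum_congr rfl fun j _ => ?_
    have hcast : (↑(fun i => c j i * g i ^ j) : Germ (U : Filter ι) K)
        = (↑(c j * g ^ j : ι → K) : Germ (U : Filter ι) K) := rfl
    rw [hcast, Filter.Germ.coe_mul, Filter.Germ.coe_pow, hcrep]
  have hderiv : ∀ g : ι → K,
      (↑(fun i => (F i).derivative.eval (g i)) : Germ (U : Filter ι) K)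
        = Polynomial.eval (↑g) (Polynomial.derivative f) := by
    intro g
    have h2 : (fun i => (F i).derivative.eval (g i))
        = fun i => ∑ j ∈ Finset.range (d + 1), c j i * (j : K) * g i ^ (j - 1) := by
      funext i
      simp only [hF, map_sum, Polynomial.eval_finset_sum]
      refine Finset.sum_congr rfl fun j _ => ?_
      rw [Polynomial.derivative_C_mul_X_pow]
      simp
    have h1 : Polynomial.eval (↑g : Germ (U : Filter ι) K) (Polynomial.derivative f)
        = ∑ j ∈ Finset.range (d + 1),
            f.coeff j * (j : Germ (U : Filter ι) K) * (↑g : Germ (U : Filter ι) K) ^ (j - 1) := by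
      conv_lhs => rw [Polynomial.as_sum_range' f (d + 1) hdlt]
      rw [map_sum, Polynomial.eval_finset_sum]
      refine Finset.sum_congr rfl fun j _ => ?_
      simp [Polynomial.derivative_monomial]
    rw [h2, germ_sum, h1]
    refine Finset.sum_congr rfl fun j _ => ?_
    have hcast : (↑(fun i => c j i * (j : K) * g i ^ (j - 1)) : Germ (U : Filter ι) K)
        = (↑(c j * (fun _ => (j : K)) * g ^ (j - 1) : ι → K) : Germ (U : Filter ι) K) := rfl
    rw [hcast, Filter.Germ.coe_mul, Filter.Germ.coe_mul, Filter.Germ.coe_pow, hcrep,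
      Filter.Germ.natCast_def]
  have hcs : ∀ᶠ i in U, ∀ j ∈ Finset.range (d + 1),
      (0 : WithTop (w i).Γ) ≤ (w i).v (c j i) := by
    rw [Filter.eventually_all_finset]
    intro j _
    have h1 := hcoeff j
    rw [← hcrep j, uv_coe, uvA_nonneg_iff] at h1
    exact h1
  have hA0 : ∀ᶠ i in U, (0 : WithTop (w i).Γ) ≤ (w i).v (A i) := by
    rw [← hA, uv_coe, uvA_nonneg_iff] at ha
    exact ha
  have hpos : ∀ᶠ i in U, (0 : WithTop (w i).Γ) < (w i).v ((F i).eval (A i)) := by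
    rw [← hA, ← heval A, uv_coe, uvA_pos_iff] at hfa
    exact hfa
  have hnpos : ∀ᶠ i in U, ¬ (0 : WithTop (w i).Γ) < (w i).v ((F i).derivative.eval (A i)) := by
    rw [← hA, ← hderiv A, uv_coe] at hf'a
    exact uvA_not_pos hf'a
  have hball : ∀ᶠ i in U, ∃ b : K,
      (0 : WithTop (w i).Γ) ≤ (w i).v b ∧ (F i).eval b = 0 ∧
        (0 : WithTop (w i).Γ) < (w i).v (b - A i) := by
    filter_upwards [hd, hcs, hA0, hpos, hnpos] with i h1 h2 h3 h4 h5
    refine h1 (F i) (hFdeg i) ?_ (A i) h3 h4 h5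
    intro j
    rw [hFcoeff i j]
    by_cases hj : j < d + 1
    · rw [if_pos hj]; exact h2 j (Finset.mem_range.2 hj)
    · rw [if_neg hj, ((w i).isVal.1 0).2 rfl]; exact le_top
  classical
  set B : ι → K := fun i =>
    if hb : ∃ b : K, (0 : WithTop (w i).Γ) ≤ (w i).v b ∧ (F i).eval b = 0 ∧
        (0 : WithTop (w i).Γ) < (w i).v (b - A i) then hb.choose else 0 with hBdef
  have hB : ∀ᶠ i in U, (0 : WithTop (w i).Γ) ≤ (w i).v (B i) ∧ (F i).eval (B i) = 0 ∧
      (0 : WithTop (w i).Γ) < (w i).v (B i - A i) := by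
    filter_upwards [hball] with i hi
    have : B i = hi.choose := by rw [hBdef]; exact dif_pos hi
    rw [this]
    exact hi.choose_spec
  refine ⟨↑B, ?_, ?_, ?_⟩
  · rw [uv_coe, uvA_nonneg_iff]
    filter_upwards [hB] with i hi using hi.1
  · rw [← heval B, show (0 : Germ (U : Filter ι) K) = Filter.Germ.ofFun (fun _ : ι => (0 : K)) from rfl,
      Filter.Germ.coe_eq]
    filter_upwards [hB] with i hi using hi.2.1
  · rw [← hA, ← Filter.Germ.coe_sub, uv_coe, uvA_pos_iff]
    filter_upwards [hB] with i hi using hi.2.2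

end GermVal


end ValAux

open Filter in
theorem stmt7 (K : Type u) [Field K]
    (h : ∀ n : ℕ, ∃ w : ValuationOn K, w.Nontriv ∧ w.DegLEHens n) :
    ∃ W : HenselianFieldBundle.{u}, RingElemEquiv K W.L := by
  
  classical
  choose w hw1 hw2 using h
  let U : Ultrafilter ℕ := Filter.hyperfilter ℕ
  let L : Type u := Germ (U : Filter ℕ) K
  letI : Field L := inferInstanceAs (Field (Germ (U : Filter ℕ) K))
  let val : ValuationOn L := { Γ := UPG U (fun i => (w i).Γ), v := uv U w, isVal := uv_isVal }
  have hens : val.Hens := by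
    intro n
    refine uv_degLE n ?_
    have hmem : {i : ℕ | n ≤ i} ∈ U := by
      refine Filter.mem_hyperfilter_of_finite_compl ?_
      refine (Set.finite_Iio n).subset ?_
      intro i hi
      simpa using hi
    refine Filter.mem_of_superset hmem fun i hi => ?_
    exact deg_mono hi (hw2 i)
  have nontriv : val.Nontriv := by
    obtain ⟨x, h1, h2⟩ := uv_nontriv (U := U) hw1
    exact ⟨x, h1, h2⟩
  refine ⟨⟨L, val, nontriv, hens⟩, ?_⟩
  show RingElemEquiv K L
  unfold RingElemEquiv
  letI := compatibleRingOfRing K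
  letI := compatibleRingOfRing L
  have e1 : K ≅[Language.ring] ((U : Filter ℕ).Product fun _ => K) := by
    rw [FirstOrder.Language.elementarilyEquivalent_iff]
    intro φ
    rw [Ultraproduct.sentence_realize]
    exact Filter.eventually_const.symm
  have e2 : ((U : Filter ℕ).Product fun _ => K) ≅[Language.ring] L := by
    have hx : ∀ x : (U : Filter ℕ).Product fun _ => K,
        ∃ g : ℕ → K, (↑g : (U : Filter ℕ).Product fun _ => K) = x :=
      fun x => Quotient.inductionOn' x fun g => ⟨g, rfl⟩
    let g : Language.ring.Equiv ((U : Filter ℕ).Product fun _ => K) L :=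
      { toFun := fun x => x
        invFun := fun x => x
        left_inv := fun x => rfl
        right_inv := fun x => rfl
        map_fun' := by
          intro n F x
          choose gs hgs using fun i => hx (x i)
          have hxeq : x = fun i => (↑(gs i) : (U : Filter ℕ).Product fun _ => K) :=
            funext fun i => (hgs i).symm
          rw [hxeq]
          refine (Ultraproduct.funMap_cast (u := U) (M := fun _ => K) F gs).trans ?_
          show (Filter.Germ.ofFun (fun a => Structure.funMap F fun i => gs i a) : L)
            = Structure.funMap F (fun i => (Filter.Germ.ofFun (gs i) : L))
          cases F <;> rfl
        map_rel' := by
          intro n r x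
          exact Empty.elim r }
    exact StrongHomClass.elementarilyEquivalent g
  exact e1.trans e2
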